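/- For the logarithmic cost c(p,q') = (1/α) log(1 + α p·q') on (0,∞)ⁿ × (0,∞)ⁿ, the Riemann curvature of the Kim–McCann metric satisfies R̄_{ij̄k̄ℓ} = (α/2)(c_{i:j̄} c_{ℓ:k̄} + c_{i:k̄} c_{ℓ:j̄}) at every point. -/

import Mathlib

noncomputable def pd1 {n : ℕ} (F : (Fin n → ℝ) → (Fin n → ℝ) → ℝ) (i : Fin n) :
    (Fin n → ℝ) → (Fin n → ℝ) → ℝ :=
  fun x y => fderiv ℝ (fun x' => F x' y) x (Pi.single i 1)

noncomputable def pd2 {n : ℕ} (F : (Fin n → ℝ) → (Fin n → ℝ) → ℝ) (j : Fin n) :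
    (Fin n → ℝ) → (Fin n → ℝ) → ℝ :=
  fun x y => fderiv ℝ (fun y' => F x y') y (Pi.single j 1)

set_option maxHeartbeats 2000000

noncomputable def lmap {n : ℕ} (w : Fin n → ℝ) : (Fin n → ℝ) →L[ℝ] ℝ :=
  ∑ m, w m • (ContinuousLinearMap.proj m : (Fin n → ℝ) →L[ℝ] ℝ)

lemma lmap_apply {n : ℕ} (w v : Fin n → ℝ) : lmap w v = ∑ m, w m * v m := by
  simp [lmap]

lemma lmap_single {n : ℕ} (w : Fin n → ℝ) (j : Fin n) : lmap w (Pi.single j 1) = w j := by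
  simp [lmap_apply, Pi.single_apply]

lemma hasProj {n : ℕ} (a : Fin n) (y : Fin n → ℝ) :
    HasFDerivAt (𝕜 := ℝ) (fun v : Fin n → ℝ => v a) (ContinuousLinearMap.proj a) y :=
  (ContinuousLinearMap.proj a : (Fin n → ℝ) →L[ℝ] ℝ).hasFDerivAt

lemma hasD {n : ℕ} (α : ℝ) (w : Fin n → ℝ) (y : Fin n → ℝ) :
    HasFDerivAt (fun v : Fin n → ℝ => 1 + α * ∑ m, w m * v m) (α • lmap w) y := by
  have h1 : HasFDerivAt (fun v : Fin n → ℝ => ∑ m, w m * v m) (lmap w) y :=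
    (lmap w).hasFDerivAt.congr_of_eventuallyEq
      (Filter.Eventually.of_forall fun v => (lmap_apply w v).symm)
  exact (h1.const_mul α).const_add 1

lemma hasD' {n : ℕ} (α : ℝ) (w : Fin n → ℝ) (y : Fin n → ℝ) :
    HasFDerivAt (fun v : Fin n → ℝ => 1 + α * ∑ m, v m * w m) (α • lmap w) y :=
  (hasD α w y).congr_of_eventuallyEq
    (Filter.Eventually.of_forall fun v =>
      congrArg (fun s => 1 + α * s) (Finset.sum_congr rfl fun m _ => mul_comm _ _))

lemma contD {n : ℕ} (α : ℝ) (p : Fin n → ℝ) :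
    IsOpen {y : Fin n → ℝ | 0 < 1 + α * ∑ m, p m * y m} := by
  have hcont : Continuous fun y : Fin n → ℝ => 1 + α * ∑ m, p m * y m := by
    continuity
  exact isOpen_lt continuous_const hcont

lemma myinv {n : ℕ} {f : (Fin n → ℝ) → ℝ} {f' : (Fin n → ℝ) →L[ℝ] ℝ} {x : Fin n → ℝ}
    (hf : HasFDerivAt f f' x) (hx : f x ≠ 0) :
    HasFDerivAt (fun y => (f y)⁻¹) (-((f x ^ 2)⁻¹ • f')) x := by
  have h := (hasDerivAt_inv hx).comp_hasFDerivAt x hf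
  simpa [Function.comp_def] using h

section main
variable {n : ℕ} (α : ℝ) (hα : 0 < α) (c : (Fin n → ℝ) → (Fin n → ℝ) → ℝ)
  (hc : ∀ p q', c p q' = (1 / α) * Real.log (1 + α * ∑ i, p i * q' i))

include hα hc

lemma L1 (p q' : Fin n → ℝ) (hD : 0 < 1 + α * ∑ m, p m * q' m) (i : Fin n) :
    pd1 c i p q' = q' i / (1 + α * ∑ m, p m * q' m) := by
  have hne : (1 + α * ∑ m, p m * q' m) ≠ 0 := ne_of_gt hD
  have hS : HasFDerivAt (fun x : Fin n → ℝ => 1 + α * ∑ m, x m * q' m) (α • lmap q') p :=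
    hasD' α q' p
  have hlog := (hS.log (by simpa using hne)).const_mul (1 / α)
  have hfun : (fun x => c x q') = fun x => (1 / α) * Real.log (1 + α * ∑ m, x m * q' m) :=
    funext fun x => hc x q'
  show fderiv ℝ (fun x' => c x' q') p (Pi.single i 1) = _
  rw [hfun, hlog.fderiv]
  simp only [ContinuousLinearMap.coe_smul', Pi.smul_apply, lmap_single, smul_eq_mul]
  field_simp


lemma L2 (p q' : Fin n → ℝ) (hD : 0 < 1 + α * ∑ m, p m * q' m) (i j : Fin n) :
    pd2 (pd1 c i) j p q'
      = (if i = j then 1 else 0) / (1 + α * ∑ m, p m * q' m)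
        - α * q' i * p j / (1 + α * ∑ m, p m * q' m) ^ 2 := by
  have hne : (1 + α * ∑ m, p m * q' m) ≠ 0 := ne_of_gt hD
  have hev : (fun y => pd1 c i p y)
      =ᶠ[nhds q'] fun y => y i * (1 + α * ∑ m, p m * y m)⁻¹ := by
    filter_upwards [(contD α p).mem_nhds hD] with y hy
    rw [L1 α hα c hc p y hy i, div_eq_mul_inv]
  have hg := (hasProj i q').mul (myinv (hasD α p q') hne)
  show fderiv ℝ (fun y' => pd1 c i p y') q' (Pi.single j 1) = _
  simp only [Pi.mul_def, Pi.add_def] at hg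
  rw [hev.fderiv_eq, hg.fderiv]
  simp only [ContinuousLinearMap.add_apply, ContinuousLinearMap.coe_smul',
    ContinuousLinearMap.coe_neg', Pi.smul_apply, Pi.neg_apply,
    ContinuousLinearMap.proj_apply, lmap_single, smul_eq_mul, Pi.single_apply]
  generalize (if i = j then (1:ℝ) else 0) = d
  field_simp
  ring

lemma L3 (p q' : Fin n → ℝ) (hD : 0 < 1 + α * ∑ m, p m * q' m) (i l : Fin n) :
    pd1 (pd1 c i) l p q'
      = -α * q' i * q' l / (1 + α * ∑ m, p m * q' m) ^ 2 := by
  have hne : (1 + α * ∑ m, p m * q' m) ≠ 0 := ne_of_gt hD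
  have hopen : IsOpen {x : Fin n → ℝ | 0 < 1 + α * ∑ m, x m * q' m} := by
    have hcont : Continuous fun x : Fin n → ℝ => 1 + α * ∑ m, x m * q' m := by continuity
    exact isOpen_lt continuous_const hcont
  have hev : (fun x => pd1 c i x q')
      =ᶠ[nhds p] fun x => q' i * (1 + α * ∑ m, x m * q' m)⁻¹ := by
    have hmem : p ∈ {x : Fin n → ℝ | 0 < 1 + α * ∑ m, x m * q' m} := by
      simpa [mul_comm] using hD
    filter_upwards [hopen.mem_nhds hmem] with x hx
    have hx' : 0 < 1 + α * ∑ m, x m * q' m := hx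
    rw [L1 α hα c hc x q' (by simpa [mul_comm] using hx') i, div_eq_mul_inv]
  have hne' : (1 + α * ∑ m, p m * q' m) ≠ 0 := hne
  have hg := (myinv (hasD' α q' p) (by simpa [mul_comm] using hne')).const_mul (q' i)
  show fderiv ℝ (fun x' => pd1 c i x' q') p (Pi.single l 1) = _
  rw [hev.fderiv_eq, hg.fderiv]
  simp only [ContinuousLinearMap.coe_smul', Pi.smul_apply, ContinuousLinearMap.coe_neg',
    Pi.neg_apply, lmap_single, smul_eq_mul]
  have : (∑ m, p m * q' m) = ∑ m, q' m * p m := Finset.sum_congr rfl fun m _ => mul_comm _ _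
  rw [this] at hne ⊢
  field_simp

lemma L4 (p q' : Fin n → ℝ) (hD : 0 < 1 + α * ∑ m, p m * q' m) (i l β : Fin n) :
    pd2 (pd1 (pd1 c i) l) β p q'
      = -α * ((if i = β then 1 else 0) * q' l + q' i * (if l = β then 1 else 0))
          / (1 + α * ∑ m, p m * q' m) ^ 2
        + 2 * α ^ 2 * q' i * q' l * p β / (1 + α * ∑ m, p m * q' m) ^ 3 := by
  have hne : (1 + α * ∑ m, p m * q' m) ≠ 0 := ne_of_gt hD
  have hinv := myinv (hasD α p q') hne
  have hev : (fun y => pd1 (pd1 c i) l p y) =ᶠ[nhds q'] fun y =>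
      (-α) * ((y i * y l) * ((1 + α * ∑ m, p m * y m)⁻¹ * (1 + α * ∑ m, p m * y m)⁻¹)) := by
    filter_upwards [(contD α p).mem_nhds hD] with y hy
    have hyne : (1 + α * ∑ m, p m * y m) ≠ 0 := ne_of_gt hy
    rw [L3 α hα c hc p y hy i l]
    field_simp
  have hg := (((hasProj i q').mul (hasProj l q')).mul (hinv.mul hinv)).const_mul (-α)
  show fderiv ℝ (fun y' => pd1 (pd1 c i) l p y') q' (Pi.single β 1) = _
  simp only [Pi.mul_def, Pi.add_def] at hg
  rw [hev.fderiv_eq, hg.fderiv]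
  simp only [ContinuousLinearMap.add_apply, ContinuousLinearMap.coe_smul',
    ContinuousLinearMap.coe_neg', Pi.smul_apply, Pi.neg_apply,
    ContinuousLinearMap.proj_apply, lmap_single, smul_eq_mul, Pi.single_apply]
  generalize (if i = β then (1:ℝ) else 0) = d1
  generalize (if l = β then (1:ℝ) else 0) = d2
  field_simp
  ring

lemma L5 (p q' : Fin n → ℝ) (hD : 0 < 1 + α * ∑ m, p m * q' m) (a j k : Fin n) :
    pd2 (pd2 (pd1 c a) j) k p q'
      = -α * ((if a = j then 1 else 0) * p k + (if a = k then 1 else 0) * p j)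
          / (1 + α * ∑ m, p m * q' m) ^ 2
        + 2 * α ^ 2 * q' a * p j * p k / (1 + α * ∑ m, p m * q' m) ^ 3 := by
  have hne : (1 + α * ∑ m, p m * q' m) ≠ 0 := ne_of_gt hD
  have hinv := myinv (hasD α p q') hne
  have hev : (fun y => pd2 (pd1 c a) j p y) =ᶠ[nhds q'] fun y =>
      (if a = j then (1:ℝ) else 0) * (1 + α * ∑ m, p m * y m)⁻¹
      + (-(α * p j)) * (y a * ((1 + α * ∑ m, p m * y m)⁻¹ * (1 + α * ∑ m, p m * y m)⁻¹)) := by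
    filter_upwards [(contD α p).mem_nhds hD] with y hy
    have hyne : (1 + α * ∑ m, p m * y m) ≠ 0 := ne_of_gt hy
    rw [L2 α hα c hc p y hy a j]
    generalize (if a = j then (1:ℝ) else 0) = d
    field_simp
    ring
  have hg := (hinv.const_mul (if a = j then (1:ℝ) else 0)).add
    (((hasProj a q').mul (hinv.mul hinv)).const_mul (-(α * p j)))
  show fderiv ℝ (fun y' => pd2 (pd1 c a) j p y') q' (Pi.single k 1) = _
  simp only [Pi.mul_def, Pi.add_def] at hg
  rw [hev.fderiv_eq, hg.fderiv]
  simp only [ContinuousLinearMap.add_apply, ContinuousLinearMap.coe_smul',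
    ContinuousLinearMap.coe_neg', Pi.smul_apply, Pi.neg_apply,
    ContinuousLinearMap.proj_apply, lmap_single, smul_eq_mul, Pi.single_apply]
  generalize (if a = j then (1:ℝ) else 0) = d1
  generalize (if a = k then (1:ℝ) else 0) = d2
  field_simp
  ring

lemma L6 (p q' : Fin n → ℝ) (hD : 0 < 1 + α * ∑ m, p m * q' m) (i l j k : Fin n) :
    pd2 (pd2 (pd1 (pd1 c i) l) j) k p q'
      = -α * ((if i = j then 1 else 0) * (if l = k then 1 else 0)
              + (if i = k then 1 else 0) * (if l = j then 1 else 0))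
          / (1 + α * ∑ m, p m * q' m) ^ 2
        + 2 * α ^ 2 * (((if i = j then 1 else 0) * q' l + q' i * (if l = j then 1 else 0)) * p k
              + ((if i = k then 1 else 0) * q' l + q' i * (if l = k then 1 else 0)) * p j)
          / (1 + α * ∑ m, p m * q' m) ^ 3
        - 6 * α ^ 3 * q' i * q' l * p j * p k / (1 + α * ∑ m, p m * q' m) ^ 4 := by
  have hne : (1 + α * ∑ m, p m * q' m) ≠ 0 := ne_of_gt hD
  have hinv := myinv (hasD α p q') hne
  have hev : (fun y => pd2 (pd1 (pd1 c i) l) j p y) =ᶠ[nhds q'] fun y =>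
      (-(α * (if i = j then (1:ℝ) else 0)))
          * (y l * ((1 + α * ∑ m, p m * y m)⁻¹ * (1 + α * ∑ m, p m * y m)⁻¹))
      + (-(α * (if l = j then (1:ℝ) else 0)))
          * (y i * ((1 + α * ∑ m, p m * y m)⁻¹ * (1 + α * ∑ m, p m * y m)⁻¹))
      + (2 * α ^ 2 * p j) * ((y i * y l)
          * ((1 + α * ∑ m, p m * y m)⁻¹ * ((1 + α * ∑ m, p m * y m)⁻¹ * (1 + α * ∑ m, p m * y m)⁻¹))) := by
    filter_upwards [(contD α p).mem_nhds hD] with y hy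
    have hyne : (1 + α * ∑ m, p m * y m) ≠ 0 := ne_of_gt hy
    rw [L4 α hα c hc p y hy i l j]
    generalize (if i = j then (1:ℝ) else 0) = d1
    generalize (if l = j then (1:ℝ) else 0) = d2
    field_simp
    ring
  have h1 := ((hasProj l q').mul (hinv.mul hinv)).const_mul (-(α * (if i = j then (1:ℝ) else 0)))
  have h2 := ((hasProj i q').mul (hinv.mul hinv)).const_mul (-(α * (if l = j then (1:ℝ) else 0)))
  have h3 := (((hasProj i q').mul (hasProj l q')).mul (hinv.mul (hinv.mul hinv))).const_mul
    (2 * α ^ 2 * p j)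
  have hg := (h1.add h2).add h3
  show fderiv ℝ (fun y' => pd2 (pd1 (pd1 c i) l) j p y') q' (Pi.single k 1) = _
  simp only [Pi.mul_def, Pi.add_def] at hg
  rw [hev.fderiv_eq, hg.fderiv]
  simp only [ContinuousLinearMap.add_apply, ContinuousLinearMap.coe_smul',
    ContinuousLinearMap.coe_neg', Pi.smul_apply, Pi.neg_apply,
    ContinuousLinearMap.proj_apply, lmap_single, smul_eq_mul, Pi.single_apply]
  generalize (if i = j then (1:ℝ) else 0) = d1
  generalize (if l = j then (1:ℝ) else 0) = d2
  generalize (if i = k then (1:ℝ) else 0) = d3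
  generalize (if l = k then (1:ℝ) else 0) = d4
  field_simp
  ring

end main

/-- for the logarithmic cost `c(p,q') = (1/α) log(1 + α p·q')` on the
positive orthant, the Riemann curvature of the Kim–McCann metric,
`R̄_{ij̄k̄ℓ} = (1/2)(−c_{iℓ:j̄k̄} + c_{iℓ:β̄}c^{β̄:α}c_{α:j̄k̄})`, satisfies
`R̄_{ij̄k̄ℓ} = (α/2)(c_{i:j̄} c_{ℓ:k̄} + c_{i:k̄} c_{ℓ:j̄})` at every point. -/
theorem log_cost_curvature {n : ℕ} (α : ℝ) (hα : 0 < α)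
    (c : (Fin n → ℝ) → (Fin n → ℝ) → ℝ)
    (hc : ∀ p q', c p q' = (1 / α) * Real.log (1 + α * ∑ i, p i * q' i))
    (cinv : (Fin n → ℝ) → (Fin n → ℝ) → Matrix (Fin n) (Fin n) ℝ)
    (hcinv : ∀ p q', (∀ i, 0 < p i) → (∀ i, 0 < q' i) →
      (Matrix.of fun i j => pd2 (pd1 c i) j p q') * cinv p q' = 1 ∧
      cinv p q' * (Matrix.of fun i j => pd2 (pd1 c i) j p q') = 1)
    (Rb : (Fin n → ℝ) → (Fin n → ℝ) → Fin n → Fin n → Fin n → Fin n → ℝ)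
    (hRb : ∀ p q' i j k l, Rb p q' i j k l
      = (1 / 2) * (-(pd2 (pd2 (pd1 (pd1 c i) l) j) k p q')
        + ∑ β, ∑ a, pd2 (pd1 (pd1 c i) l) β p q' * cinv p q' β a
            * pd2 (pd2 (pd1 c a) j) k p q')) :
    ∀ p q' : Fin n → ℝ, (∀ i, 0 < p i) → (∀ i, 0 < q' i) →
      ∀ i j k l : Fin n,
        Rb p q' i j k l = (α / 2) * (pd2 (pd1 c i) j p q' * pd2 (pd1 c l) k p q'
          + pd2 (pd1 c i) k p q' * pd2 (pd1 c l) j p q') := by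

  intro p q' hp hq' i j k l
  have hS : 0 ≤ ∑ m, p m * q' m :=
    Finset.sum_nonneg fun m _ => le_of_lt (mul_pos (hp m) (hq' m))
  have hD : 0 < 1 + α * ∑ m, p m * q' m := by nlinarith [mul_nonneg hα.le hS]
  have hne : (1 + α * ∑ m, p m * q' m) ≠ 0 := ne_of_gt hD
  have hinv1 : ∀ x a : Fin n,
      (∑ β, pd2 (pd1 c x) β p q' * cinv p q' β a) = if x = a then 1 else 0 := by
    intro x a
    have h := congrArg (fun A : Matrix (Fin n) (Fin n) ℝ => A x a) (hcinv p q' hp hq').1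
    simpa [Matrix.mul_apply, Matrix.one_apply] using h
  have hfac : ∀ β, pd2 (pd1 (pd1 c i) l) β p q'
      = (-α / (1 + α * ∑ m, p m * q' m))
        * (q' l * pd2 (pd1 c i) β p q' + q' i * pd2 (pd1 c l) β p q') := by
    intro β
    rw [L4 α hα c hc p q' hD i l β, L2 α hα c hc p q' hD i β, L2 α hα c hc p q' hD l β]
    generalize (if i = β then (1:ℝ) else 0) = d1
    generalize (if l = β then (1:ℝ) else 0) = d2
    field_simp
    ring
  have key : ∀ a, (∑ β, pd2 (pd1 (pd1 c i) l) β p q' * cinv p q' β a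
        * pd2 (pd2 (pd1 c a) j) k p q')
      = (-α / (1 + α * ∑ m, p m * q' m))
        * (q' l * (if i = a then 1 else 0) + q' i * (if l = a then 1 else 0))
        * pd2 (pd2 (pd1 c a) j) k p q' := by
    intro a
    calc (∑ β, pd2 (pd1 (pd1 c i) l) β p q' * cinv p q' β a
          * pd2 (pd2 (pd1 c a) j) k p q')
        = ∑ β, ((-α / (1 + α * ∑ m, p m * q' m)) * pd2 (pd2 (pd1 c a) j) k p q')
          * (q' l * (pd2 (pd1 c i) β p q' * cinv p q' β a)
            + q' i * (pd2 (pd1 c l) β p q' * cinv p q' β a)) := by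
          refine Finset.sum_congr rfl fun β _ => ?_
          rw [hfac β]; ring
      _ = ((-α / (1 + α * ∑ m, p m * q' m)) * pd2 (pd2 (pd1 c a) j) k p q')
          * (q' l * (∑ β, pd2 (pd1 c i) β p q' * cinv p q' β a)
            + q' i * (∑ β, pd2 (pd1 c l) β p q' * cinv p q' β a)) := by
          rw [← Finset.mul_sum]
          congr 1
          rw [Finset.sum_add_distrib, ← Finset.mul_sum, ← Finset.mul_sum]
      _ = _ := by rw [hinv1 i a, hinv1 l a]; ring
  have hsum : (∑ β, ∑ a, pd2 (pd1 (pd1 c i) l) β p q' * cinv p q' β a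
        * pd2 (pd2 (pd1 c a) j) k p q')
      = (-α / (1 + α * ∑ m, p m * q' m))
        * (q' l * pd2 (pd2 (pd1 c i) j) k p q' + q' i * pd2 (pd2 (pd1 c l) j) k p q') := by
    rw [Finset.sum_comm]
    rw [Finset.sum_congr rfl fun a _ => key a]
    have hsplit : ∀ a : Fin n, (-α / (1 + α * ∑ m, p m * q' m))
        * (q' l * (if i = a then 1 else 0) + q' i * (if l = a then 1 else 0))
        * pd2 (pd2 (pd1 c a) j) k p q'
        = (if i = a then (-α / (1 + α * ∑ m, p m * q' m)) * q' l
            * pd2 (pd2 (pd1 c a) j) k p q' else 0)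
          + (if l = a then (-α / (1 + α * ∑ m, p m * q' m)) * q' i
            * pd2 (pd2 (pd1 c a) j) k p q' else 0) := by
      intro a
      by_cases h1 : i = a <;> by_cases h2 : l = a <;> simp [h1, h2] <;> ring
    rw [Finset.sum_congr rfl fun a _ => hsplit a, Finset.sum_add_distrib,
      Finset.sum_ite_eq, Finset.sum_ite_eq]
    simp only [Finset.mem_univ, if_true]
    ring
  rw [hRb, hsum, L6 α hα c hc p q' hD i l j k,
    L5 α hα c hc p q' hD i j k, L5 α hα c hc p q' hD l j k,
    L2 α hα c hc p q' hD i j, L2 α hα c hc p q' hD l k,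
    L2 α hα c hc p q' hD i k, L2 α hα c hc p q' hD l j]
  generalize (if i = j then (1:ℝ) else 0) = d1
  generalize (if i = k then (1:ℝ) else 0) = d2
  generalize (if l = j then (1:ℝ) else 0) = d3
  generalize (if l = k then (1:ℝ) else 0) = d4
  field_simp
  ring
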